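/- Let q be a prime power, R a finite field that is an 𝔽_q-algebra, t ∈ R nonzero, and G = SL_3(R). Let d be a natural number with d + 1 ≤ q. Then the 𝔽_q-dimension of the linear space of (d,d,d)-codewords f : G → 𝔽_q is at least |G| · (3(d+1) − 2q)/q; in particular this space is nonzero whenever 3(d+1) > 2q. -/

import Mathlib

open Matrix Polynomial

/-- The 3×3 elementary (transvection) matrix `e_{ij}(α) = I + α·E_{ij}`. -/
def elemMat {R : Type*} [CommRing R] (i j : Fin 3) (α : R) : Matrix (Fin 3) (Fin 3) R :=
  1 + Matrix.single i j α

theorem elemMat_det {R : Type*} [CommRing R] (i j : Fin 3) (hij : i ≠ j) (α : R) :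
    (elemMat i j α).det = 1 := by
  fin_cases i <;> fin_cases j <;>
    simp_all [elemMat, Matrix.det_fin_three, Matrix.single, Matrix.one_apply]

/-- The elementary matrix `e_{ij}(α)` as an element of `SL₃(R)` (for `i ≠ j`). -/
def elemSL {R : Type*} [CommRing R] (i j : Fin 3) (hij : i ≠ j) (α : R) :
    Matrix.SpecialLinearGroup (Fin 3) R :=
  ⟨elemMat i j α, elemMat_det i j hij α⟩

/-- `h₁(α) = e₃₁(αt)` for `α ∈ F`, with `F` an `R`-algebra. -/
def hGen₁ {F R : Type*} [Field F] [Field R] [Algebra F R] (t : R) (α : F) :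
    Matrix.SpecialLinearGroup (Fin 3) R :=
  elemSL 2 0 (by decide) (algebraMap F R α * t)

/-- `h₂(α) = e₁₂(αt)`. -/
def hGen₂ {F R : Type*} [Field F] [Field R] [Algebra F R] (t : R) (α : F) :
    Matrix.SpecialLinearGroup (Fin 3) R :=
  elemSL 0 1 (by decide) (algebraMap F R α * t)

/-- `h₃(α) = e₂₃(αt)`. -/
def hGen₃ {F R : Type*} [Field F] [Field R] [Algebra F R] (t : R) (α : F) :
    Matrix.SpecialLinearGroup (Fin 3) R :=
  elemSL 1 2 (by decide) (algebraMap F R α * t)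

/-- A function `g : F → F` has degree at most `d` if it agrees with (the evaluation of)
a univariate polynomial of degree at most `d`. -/
def DegLE {F : Type*} [CommRing F] (d : ℕ) (g : F → F) : Prop :=
  ∃ P : Polynomial F, P.natDegree ≤ d ∧ ∀ x, g x = P.eval x

/-- `f : SL₃(R) → F` is a `(d₁,d₂,d₃)`-codeword: along every coset line `α ↦ g·hᵢ(α)`
the function has degree at most `dᵢ`. -/
def IsCodeword {F R : Type*} [Field F] [Field R] [Algebra F R] (t : R) (d₁ d₂ d₃ : ℕ)
    (f : Matrix.SpecialLinearGroup (Fin 3) R → F) : Prop :=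
  ∀ g : Matrix.SpecialLinearGroup (Fin 3) R,
    DegLE d₁ (fun α => f (g * hGen₁ t α)) ∧
    DegLE d₂ (fun α => f (g * hGen₂ t α)) ∧
    DegLE d₃ (fun α => f (g * hGen₃ t α))

theorem DegLE.add {F : Type*} [CommRing F] {d : ℕ} {g h : F → F}
    (hg : DegLE d g) (hh : DegLE d h) : DegLE d (fun x => g x + h x) := by
  obtain ⟨P, hP, hPe⟩ := hg
  obtain ⟨Q, hQ, hQe⟩ := hh
  exact ⟨P + Q, le_trans (Polynomial.natDegree_add_le P Q) (max_le hP hQ),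
    fun x => by simp [hPe, hQe]⟩

theorem DegLE.smul {F : Type*} [CommRing F] {d : ℕ} (c : F) {g : F → F}
    (hg : DegLE d g) : DegLE d (fun x => c * g x) := by
  obtain ⟨P, hP, hPe⟩ := hg
  exact ⟨Polynomial.C c * P, le_trans (Polynomial.natDegree_C_mul_le c P) hP,
    fun x => by simp [hPe]⟩

/-- The space of `(d,d,d)`-codewords `SL₃(R) → F` as an `F`-linear subspace. -/
def codeSpace {F R : Type*} [Field F] [Field R] [Algebra F R] (t : R) (d : ℕ) :
    Submodule F (Matrix.SpecialLinearGroup (Fin 3) R → F) where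
  carrier := {f | IsCodeword t d d d f}
  add_mem' := by
    intro f f' hf hf' g
    exact ⟨((hf g).1).add ((hf' g).1), ((hf g).2.1).add ((hf' g).2.1),
      ((hf g).2.2).add ((hf' g).2.2)⟩
  zero_mem' := fun g => ⟨⟨0, by simp⟩, ⟨0, by simp⟩, ⟨0, by simp⟩⟩
  smul_mem' := by
    intro c f hf g
    exact ⟨((hf g).1).smul c, ((hf g).2.1).smul c, ((hf g).2.2).smul c⟩

section Aux
variable {R : Type*} [CommRing R]

theorem elemMat_mul (i j : Fin 3) (hij : i ≠ j) (a b : R) :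
    elemMat i j a * elemMat i j b = elemMat i j (a + b) := by
  have h0 : Matrix.single i j a * Matrix.single i j b = 0 :=
    Matrix.single_mul_single_of_ne (h := hij.symm) ..
  unfold elemMat
  rw [Matrix.single_add]
  simp only [mul_add, add_mul, one_mul, mul_one, h0]
  abel

theorem elemSL_mul (i j : Fin 3) (hij : i ≠ j) (a b : R) :
    elemSL i j hij a * elemSL i j hij b = elemSL i j hij (a + b) :=
  Subtype.ext (elemMat_mul i j hij a b)

theorem elemSL_zero (i j : Fin 3) (hij : i ≠ j) :
    elemSL i j hij (0 : R) = 1 := by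
  apply Subtype.ext
  simp [elemSL, elemMat, Matrix.SpecialLinearGroup.coe_one]

theorem elemMat_apply_same (i j : Fin 3) (hij : i ≠ j) (a : R) :
    elemMat i j a i j = a := by
  simp [elemMat, Matrix.one_apply, hij]
end Aux

section Line
variable {F R : Type*} [Field F] [Field R] [Algebra F R]

/-- The generic line generator `α ↦ e_{ij}(αt)`. -/
def lineGen (t : R) (i j : Fin 3) (hij : i ≠ j) (α : F) :
    Matrix.SpecialLinearGroup (Fin 3) R :=
  elemSL i j hij (algebraMap F R α * t)

theorem lineGen_add (t : R) (i j : Fin 3) (hij : i ≠ j) (α β : F) :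
    lineGen (F := F) t i j hij (α + β) = lineGen t i j hij α * lineGen t i j hij β := by
  unfold lineGen
  rw [map_add, add_mul, ← elemSL_mul]

theorem lineGen_zero (t : R) (i j : Fin 3) (hij : i ≠ j) :
    lineGen (F := F) t i j hij 0 = 1 := by
  simp [lineGen, elemSL_zero]

theorem lineGen_injective (t : R) (ht : t ≠ 0) (i j : Fin 3) (hij : i ≠ j) :
    Function.Injective (lineGen (F := F) t i j hij) := by
  intro α β h
  have h2 : algebraMap F R α * t = algebraMap F R β * t := by
    have := congrArg (fun g : Matrix.SpecialLinearGroup (Fin 3) R => (g : Matrix (Fin 3) (Fin 3) R) i j) h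
    simpa [lineGen, elemSL, elemMat_apply_same i j hij] using this
  exact (algebraMap F R).injective (mul_right_cancel₀ ht h2)

/-- The line subgroup `{e_{ij}(αt) : α ∈ F}`. -/
def lineSubgroup (t : R) (i j : Fin 3) (hij : i ≠ j) :
    Subgroup (Matrix.SpecialLinearGroup (Fin 3) R) where
  carrier := Set.range (lineGen (F := F) t i j hij)
  one_mem' := ⟨0, lineGen_zero t i j hij⟩
  mul_mem' := by
    rintro x y ⟨a, rfl⟩ ⟨b, rfl⟩
    exact ⟨a + b, lineGen_add t i j hij a b⟩
  inv_mem' := by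
    rintro x ⟨a, rfl⟩
    refine ⟨-a, ?_⟩
    have h1 : lineGen (F := F) t i j hij (-a) * lineGen t i j hij a = 1 := by
      rw [← lineGen_add, neg_add_cancel, lineGen_zero]
    exact eq_inv_of_mul_eq_one_left h1

theorem card_lineSubgroup (t : R) (ht : t ≠ 0) (i j : Fin 3) (hij : i ≠ j) :
    Nat.card (lineSubgroup (F := F) t i j hij) = Nat.card F := by
  have : Nat.card (lineSubgroup (F := F) t i j hij)
      = Nat.card (Set.range (lineGen (F := F) t i j hij)) := rfl
  rw [this, Nat.card_range_of_injective (lineGen_injective t ht i j hij)]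
end Line

section Poly
variable {F : Type*} [Field F]

/-- Evaluation of polynomials as a linear map `F[X] →ₗ[F] (F → F)`. -/
def evalLM (F : Type*) [Field F] : Polynomial F →ₗ[F] (F → F) where
  toFun P := fun x => P.eval x
  map_add' P Q := by funext x; simp
  map_smul' c P := by funext x; simp

theorem degLE_iff_mem (d : ℕ) (g : F → F) :
    DegLE d g ↔ g ∈ Submodule.map (evalLM F) (Polynomial.degreeLT F (d + 1)) := by
  constructor
  · rintro ⟨P, hP, hPe⟩
    refine ⟨P, Polynomial.mem_degreeLT.2 ?_, (funext fun x => (hPe x).symm)⟩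
    exact lt_of_le_of_lt (Polynomial.degree_le_natDegree.trans (Nat.cast_le.2 hP))
      (Nat.cast_lt.mpr d.lt_succ_self)
  · rintro ⟨P, hP, rfl⟩
    refine ⟨P, ?_, fun x => rfl⟩
    by_cases hP0 : P = 0
    · simp [hP0]
    · exact Nat.lt_succ_iff.1
        ((Polynomial.natDegree_lt_iff_degree_lt hP0).2 (Polynomial.mem_degreeLT.1 hP))

theorem evalLM_inj_on_degreeLT [Fintype F] {d : ℕ} (hd : d + 1 ≤ Fintype.card F) :
    Function.Injective ((evalLM F).comp (Polynomial.degreeLT F (d + 1)).subtype) := by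
  rw [← LinearMap.ker_eq_bot, LinearMap.ker_eq_bot']
  intro ⟨P, hP⟩ hPz
  have heval : ∀ x : F, P.eval x = 0 := fun x => congrFun hPz x
  have hdeg : P.natDegree < Fintype.card F := by
    by_cases hP0 : P = 0
    · simpa [hP0] using Nat.lt_of_lt_of_le d.succ_pos hd
    · exact lt_of_lt_of_le
        ((Polynomial.natDegree_lt_iff_degree_lt hP0).2 (Polynomial.mem_degreeLT.1 hP)) hd
  exact Subtype.ext (Polynomial.eq_zero_of_natDegree_lt_card_of_eval_eq_zero P
    Function.injective_id heval hdeg)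

theorem finrank_W [Fintype F] {d : ℕ} (hd : d + 1 ≤ Fintype.card F) :
    Module.finrank F (Submodule.map (evalLM F) (Polynomial.degreeLT F (d + 1))) = d + 1 := by
  have hrange : LinearMap.range ((evalLM F).comp (Polynomial.degreeLT F (d + 1)).subtype)
      = Submodule.map (evalLM F) (Polynomial.degreeLT F (d + 1)) := by
    rw [LinearMap.range_comp, Submodule.range_subtype]
  rw [← hrange, LinearMap.finrank_range_of_inj (evalLM_inj_on_degreeLT hd),
    LinearEquiv.finrank_eq (Polynomial.degreeLTEquiv F (d + 1)),
    Module.finrank_fintype_fun_eq_card, Fintype.card_fin]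

/-- shifting the argument preserves `DegLE`. -/
theorem DegLE.shift {d : ℕ} {g : F → F} (hg : DegLE d g) (β : F) :
    DegLE d (fun α => g (β + α)) := by
  obtain ⟨P, hP, hPe⟩ := hg
  refine ⟨P.comp (Polynomial.X + Polynomial.C β), ?_, fun α => ?_⟩
  · rw [Polynomial.natDegree_comp, Polynomial.natDegree_X_add_C, mul_one]; exact hP
  · show g (β + α) = _
    rw [hPe, Polynomial.eval_comp]
    simp [add_comm]
end Poly

section Indexing
variable {F R : Type*} [Field F] [Field R] [Algebra F R]

/-- the (row, column) indices of the three generators -/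
def lidx : Fin 3 → Fin 3 × Fin 3 := ![(2, 0), (0, 1), (1, 2)]

theorem lidx_ne : ∀ k, (lidx k).1 ≠ (lidx k).2 := by decide

/-- the three generators as a `Fin 3`-indexed family -/
def hseq (t : R) (k : Fin 3) (α : F) : Matrix.SpecialLinearGroup (Fin 3) R :=
  lineGen t (lidx k).1 (lidx k).2 (lidx_ne k) α

theorem hseq_add (t : R) (k : Fin 3) (α β : F) :
    hseq t k (α + β) = hseq t k α * hseq t k β :=
  lineGen_add t _ _ _ α β

theorem isCodeword_iff (t : R) (d : ℕ) (f : Matrix.SpecialLinearGroup (Fin 3) R → F) :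
    IsCodeword t d d d f ↔
      ∀ (k : Fin 3) (g : Matrix.SpecialLinearGroup (Fin 3) R),
        DegLE d (fun α => f (g * hseq t k α)) := by
  constructor
  · intro h k g
    fin_cases k
    · exact (h g).1
    · exact (h g).2.1
    · exact (h g).2.2
  · intro h g
    exact ⟨h 0 g, h 1 g, h 2 g⟩
end Indexing

theorem codeSpace_finrank_ge_aux {F R : Type*} [Field F] [Fintype F] [Field R] [Fintype R]
    [Algebra F R] (t : R) (ht : t ≠ 0) (d : ℕ) (hd : d + 1 ≤ Fintype.card F) :
    ((Nat.card (Matrix.SpecialLinearGroup (Fin 3) R) : ℝ) *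
        (3 * ((d : ℝ) + 1) - 2 * (Fintype.card F : ℝ)) / (Fintype.card F : ℝ)
      ≤ (Module.finrank F (codeSpace (F := F) t d) : ℝ)) ∧
    (2 * Fintype.card F < 3 * (d + 1) → codeSpace (F := F) t d ≠ ⊥) := by
  classical
  haveI : Fintype (Matrix.SpecialLinearGroup (Fin 3) R) := Fintype.ofFinite _
  set q := Fintype.card F with hq
  set H : Fin 3 → Subgroup (Matrix.SpecialLinearGroup (Fin 3) R) := fun k =>
    lineSubgroup (F := F) t (lidx k).1 (lidx k).2 (lidx_ne k) with hH
  haveI instQ : ∀ k, Fintype ((Matrix.SpecialLinearGroup (Fin 3) R) ⧸ H k) :=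
    fun k => Fintype.ofFinite _
  set W : Submodule F (F → F) :=
    Submodule.map (evalLM F) (Polynomial.degreeLT F (d + 1)) with hW
  set Φ : (Matrix.SpecialLinearGroup (Fin 3) R → F) →ₗ[F]
      (((k : Fin 3) × ((Matrix.SpecialLinearGroup (Fin 3) R) ⧸ H k)) → ((F → F) ⧸ W)) :=
    LinearMap.pi (fun p =>
      W.mkQ.comp (LinearMap.funLeft F F (fun α => p.2.out * hseq t p.1 α))) with hΦ
  -- codeSpace is the kernel of Φ
  have hker : codeSpace (F := F) t d = LinearMap.ker Φ := by
    ext f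
    have hmem : f ∈ codeSpace (F := F) t d ↔ IsCodeword t d d d f := Iff.rfl
    rw [hmem, isCodeword_iff, LinearMap.mem_ker]
    constructor
    · intro h
      funext p
      show W.mkQ (fun α => f (p.2.out * hseq t p.1 α)) = 0
      rw [Submodule.mkQ_apply, Submodule.Quotient.mk_eq_zero]
      exact (degLE_iff_mem d _).1 (h p.1 p.2.out)
    · intro h k g
      obtain ⟨hh, hout⟩ := QuotientGroup.mk_out_eq_mul (H k) g
      obtain ⟨β, hβ⟩ : ∃ β : F, hseq t k β = (hh : Matrix.SpecialLinearGroup (Fin 3) R)⁻¹ :=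
        (H k).inv_mem hh.2
      have hg : g = (QuotientGroup.mk g :
          (Matrix.SpecialLinearGroup (Fin 3) R) ⧸ H k).out * hseq t k β := by
        rw [hout, hβ, mul_assoc, mul_inv_cancel, mul_one]
      have hrest : (fun γ => f ((QuotientGroup.mk g :
          (Matrix.SpecialLinearGroup (Fin 3) R) ⧸ H k).out * hseq t k γ)) ∈ W := by
        have h0 := congrFun h ⟨k, QuotientGroup.mk g⟩
        rw [hΦ] at h0
        simp [LinearMap.pi_apply, Submodule.Quotient.mk_eq_zero] at h0
        exact h0
      have hdeg := ((degLE_iff_mem d _).2 hrest).shift β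
      have heq : (fun α => f (g * hseq t k α)) = fun α =>
          f ((QuotientGroup.mk g :
            (Matrix.SpecialLinearGroup (Fin 3) R) ⧸ H k).out * hseq t k (β + α)) := by
        funext α
        conv_lhs => rw [hg]
        rw [mul_assoc, ← hseq_add]
      rw [heq]
      exact hdeg
  -- dimension counting
  have hfrQ : Module.finrank F ((F → F) ⧸ W) = q - (d + 1) := by
    have h1 := Submodule.finrank_quotient_add_finrank W
    have h2 : Module.finrank F W = d + 1 := finrank_W hd
    rw [Module.finrank_fintype_fun_eq_card, h2] at h1
    omega
  have hcod : Module.finrank F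
      ((((k : Fin 3) × ((Matrix.SpecialLinearGroup (Fin 3) R) ⧸ H k))) → ((F → F) ⧸ W))
      = (∑ k : Fin 3, Nat.card ((Matrix.SpecialLinearGroup (Fin 3) R) ⧸ H k)) * (q - (d + 1)) := by
    rw [Module.finrank_pi_fintype, Finset.sum_const, Finset.card_univ, smul_eq_mul, hfrQ,
      Fintype.card_sigma]
    congr 1
    exact Finset.sum_congr rfl fun k _ => Nat.card_eq_fintype_card.symm
  have hrn := LinearMap.finrank_range_add_finrank_ker Φ
  have hrle : Module.finrank F (LinearMap.range Φ) ≤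
      (∑ k : Fin 3, Nat.card ((Matrix.SpecialLinearGroup (Fin 3) R) ⧸ H k)) * (q - (d + 1)) :=
    hcod ▸ Submodule.finrank_le _
  have hdom : Module.finrank F (Matrix.SpecialLinearGroup (Fin 3) R → F)
      = Nat.card (Matrix.SpecialLinearGroup (Fin 3) R) := by
    rw [Module.finrank_fintype_fun_eq_card, Nat.card_eq_fintype_card]
  rw [hdom] at hrn
  have hkey : Nat.card (Matrix.SpecialLinearGroup (Fin 3) R) ≤
      Module.finrank F (LinearMap.ker Φ) +
      (∑ k : Fin 3, Nat.card ((Matrix.SpecialLinearGroup (Fin 3) R) ⧸ H k)) * (q - (d + 1)) := by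
    omega
  have hLag : ∀ k, Nat.card ((Matrix.SpecialLinearGroup (Fin 3) R) ⧸ H k) * q
      = Nat.card (Matrix.SpecialLinearGroup (Fin 3) R) := by
    intro k
    have h1 := Subgroup.card_eq_card_quotient_mul_card_subgroup (H k)
    have h2 : Nat.card (H k) = q := by
      rw [hq]
      rw [show (H k : Subgroup (Matrix.SpecialLinearGroup (Fin 3) R))
        = lineSubgroup (F := F) t (lidx k).1 (lidx k).2 (lidx_ne k) from rfl]
      rw [card_lineSubgroup t ht, Nat.card_eq_fintype_card]
    rw [h2] at h1
    omega
  set N := Nat.card (Matrix.SpecialLinearGroup (Fin 3) R) with hN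
  set S := ∑ k : Fin 3, Nat.card ((Matrix.SpecialLinearGroup (Fin 3) R) ⧸ H k) with hS
  have hSq : S * q = 3 * N := by
    rw [hS, Finset.sum_mul]
    simp only [hLag]
    simp [Finset.sum_const]
  have hc : Module.finrank F (codeSpace (F := F) t d)
      = Module.finrank F (LinearMap.ker Φ) := by rw [hker]
  have hq0 : (0 : ℝ) < (q : ℝ) := by
    have : 0 < q := Fintype.card_pos
    exact_mod_cast this
  have hmain : (N : ℝ) * (3 * ((d : ℝ) + 1) - 2 * (q : ℝ)) / (q : ℝ)
      ≤ (Module.finrank F (codeSpace (F := F) t d) : ℝ) := by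
    rw [hc, div_le_iff₀ hq0]
    have hcast : ((q - (d + 1) : ℕ) : ℝ) = (q : ℝ) - ((d : ℝ) + 1) := by
      rw [Nat.cast_sub hd]
      push_cast
      ring
    have hkR : (N : ℝ) ≤ (Module.finrank F (LinearMap.ker Φ) : ℝ)
        + (S : ℝ) * ((q : ℝ) - ((d : ℝ) + 1)) := by
      calc (N : ℝ) ≤ ((Module.finrank F (LinearMap.ker Φ) + S * (q - (d + 1)) : ℕ) : ℝ) :=
            Nat.cast_le.2 hkey
        _ = _ := by push_cast [hcast]; ring
    have h1 := mul_le_mul_of_nonneg_right hkR hq0.le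
    have hSqR : (S : ℝ) * (q : ℝ) = 3 * (N : ℝ) := by exact_mod_cast hSq
    have h2 : ((Module.finrank F (LinearMap.ker Φ) : ℝ)
          + (S : ℝ) * ((q : ℝ) - ((d : ℝ) + 1))) * (q : ℝ)
        = (Module.finrank F (LinearMap.ker Φ) : ℝ) * (q : ℝ)
          + 3 * (N : ℝ) * ((q : ℝ) - ((d : ℝ) + 1)) := by
      linear_combination ((q : ℝ) - ((d : ℝ) + 1)) * hSqR
    linarith [h1, h2]
  refine ⟨hmain, fun hlt hbot => ?_⟩
  have h0 : Module.finrank F (codeSpace (F := F) t d) = 0 := by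
    rw [hbot]; exact finrank_bot F _
  have hNpos : 0 < N := Nat.card_pos
  have hpos : (0 : ℝ) < (N : ℝ) * (3 * ((d : ℝ) + 1) - 2 * (q : ℝ)) / (q : ℝ) := by
    apply div_pos _ hq0
    apply mul_pos (by exact_mod_cast hNpos)
    have h3 : (2 * q : ℝ) < 3 * ((d : ℝ) + 1) := by exact_mod_cast hlt
    linarith
  rw [h0] at hmain
  simp only [Nat.cast_zero] at hmain
  linarith

/-- **Rate of the global code by constraint counting.** For `R` a finite field that is an
`𝔽_q`-algebra, `t ≠ 0` and `d + 1 ≤ q`, the `𝔽_q`-dimension of the space of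
`(d,d,d)`-codewords `f : SL₃(R) → 𝔽_q` is at least `|SL₃(R)|·(3(d+1) − 2q)/q`; in
particular this space is nonzero whenever `3(d+1) > 2q`. -/
theorem codeSpace_finrank_ge {F R : Type*} [Field F] [Fintype F] [Field R] [Fintype R]
    [Algebra F R] (t : R) (ht : t ≠ 0) (d : ℕ) (hd : d + 1 ≤ Fintype.card F) :
    ((Nat.card (Matrix.SpecialLinearGroup (Fin 3) R) : ℝ) *
        (3 * ((d : ℝ) + 1) - 2 * (Fintype.card F : ℝ)) / (Fintype.card F : ℝ)
      ≤ (Module.finrank F (codeSpace (F := F) t d) : ℝ)) ∧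
    (2 * Fintype.card F < 3 * (d + 1) → codeSpace (F := F) t d ≠ ⊥) := by
  exact codeSpace_finrank_ge_aux t ht d hd
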